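/- Let G = (V,E) be a graph on n vertices with stabilizer generators g_i = X_i ∏_{k ∈ N(i)} Z_k, and for a ∈ {0,1}^n let P_a = ∏_{i=1}^n ((−1)^{a_i} g_i + 𝟙)/2. Fix a qubit k and set Z_{N(k)} = ∏_{i ∈ N(k)} Z_i. Then (P_a + Z_{N(k)} P_a Z_{N(k)})^{T_k} = P_a + Z_{N(k)} P_a Z_{N(k)}, i.e., the sum of the projector onto a graph-basis vector and the projector onto the vector obtained by flipping all label bits in the neighborhood of k is invariant under partial transposition on qubit k. -/

import Mathlib

open Matrix Finset ComplexOrder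

/-- Operators on `(ℂ²)^{⊗n}`, indexed by bit strings `{0,1}^n`. -/
abbrev QMat (n : ℕ) := Matrix (Fin n → Fin 2) (Fin n → Fin 2) ℂ

/-- The tensor product `A 0 ⊗ ⋯ ⊗ A (n-1)` of one-qubit operators. -/
def qtensor {n : ℕ} (A : Fin n → Matrix (Fin 2) (Fin 2) ℂ) : QMat n :=
  fun v w => ∏ a, A a (v a) (w a)

def PX : Matrix (Fin 2) (Fin 2) ℂ := !![0, 1; 1, 0]

def PZ : Matrix (Fin 2) (Fin 2) ℂ := !![1, 0; 0, -1]

/-- Partial transpose on the qubits in `M`. -/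
def qpt {n : ℕ} (M : Finset (Fin n)) (X : QMat n) : QMat n :=
  fun v w => X (fun a => if a ∈ M then w a else v a) (fun a => if a ∈ M then v a else w a)

/-- The stabilizer generator `g_i = X_i ∏_{k ∈ N(i)} Z_k` of the graph `G`. -/
def gGen {n : ℕ} (G : SimpleGraph (Fin n)) [DecidableRel G.Adj] (i : Fin n) : QMat n :=
  qtensor (fun a => if a = i then PX else if G.Adj i a then PZ else 1)

/-- The projector `P_a = ∏_i ((−1)^{a_i} g_i + 𝟙)/2` onto the graph-basis vector `a`. -/
noncomputable def gBasisProj {n : ℕ} (G : SimpleGraph (Fin n)) [DecidableRel G.Adj]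
    (a : Fin n → Fin 2) : QMat n :=
  ((List.finRange n).map (fun i => (2 : ℂ)⁻¹ • ((-1 : ℂ) ^ (a i : ℕ) • gGen G i + 1))).prod

/-- The Pauli operator `Z_{N(k)} = ∏_{i ∈ N(k)} Z_i` acting on the neighborhood of `k`. -/
def ZopN {n : ℕ} (G : SimpleGraph (Fin n)) [DecidableRel G.Adj] (k : Fin n) : QMat n :=
  qtensor (fun a => if a ∈ G.neighborFinset k then PZ else 1)

/-! ### Auxiliary lemmas -/

namespace GraphProjAux

def flip2 : Fin 2 → Fin 2
  | 0 => 1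
  | 1 => 0

lemma flip2_flip2 (x : Fin 2) : flip2 (flip2 x) = x := by fin_cases x <;> rfl

lemma eq_flip2_of_ne {x y : Fin 2} (h : x ≠ y) : y = flip2 x := by
  revert h; revert x y; decide

lemma eq_of_ne_flip2 {x y : Fin 2} (h : y ≠ flip2 x) : y = x := by
  revert h; revert x y; decide

lemma qtensor_mul {n : ℕ} (A B : Fin n → Matrix (Fin 2) (Fin 2) ℂ) :
    qtensor A * qtensor B = qtensor fun a => A a * B a := by
  funext v w
  show ∑ u, qtensor A v u * qtensor B u w = _
  simp only [qtensor, Matrix.mul_apply]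
  calc ∑ u : Fin n → Fin 2, (∏ a, A a (v a) (u a)) * ∏ a, B a (u a) (w a)
      = ∑ u : Fin n → Fin 2, ∏ a, (A a (v a) (u a) * B a (u a) (w a)) :=
        Finset.sum_congr rfl fun u _ => Finset.prod_mul_distrib.symm
    _ = ∏ a, ∑ j, A a (v a) j * B a j (w a) :=
        (Fintype.prod_sum fun a j => A a (v a) j * B a j (w a)).symm

lemma qtensor_one {n : ℕ} : qtensor (fun _ : Fin n => (1 : Matrix (Fin 2) (Fin 2) ℂ)) = 1 := by
  funext v w
  simp only [qtensor, Matrix.one_apply]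
  rw [Finset.prod_boole]
  simp [funext_iff]

lemma PX_mul_PX : PX * PX = 1 := by
  ext i j; fin_cases i <;> fin_cases j <;>
    simp [PX, Matrix.mul_apply, Fin.sum_univ_two, Matrix.one_apply]

lemma PZ_mul_PZ : PZ * PZ = 1 := by
  ext i j; fin_cases i <;> fin_cases j <;>
    simp [PZ, Matrix.mul_apply, Fin.sum_univ_two, Matrix.one_apply]

lemma PZ_mul_PX : PZ * PX = (-1 : ℂ) • (PX * PZ) := by
  ext i j; fin_cases i <;> fin_cases j <;>
    simp [PX, PZ, Matrix.mul_apply, Fin.sum_univ_two]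

lemma PX_diag (x : Fin 2) : PX x x = 0 := by fin_cases x <;> simp [PX]

lemma PX_flip (x : Fin 2) : PX x (flip2 x) = 1 := by fin_cases x <;> simp [PX, flip2]

lemma PZ_diag (x : Fin 2) : PZ x x = (-1 : ℂ) ^ (x : ℕ) := by fin_cases x <;> simp [PZ]

lemma PZ_off {x y : Fin 2} (h : x ≠ y) : PZ x y = 0 := by
  fin_cases x <;> fin_cases y <;> simp_all [PZ]

lemma qtensor_smul_eq {n : ℕ} (F : Fin n → Matrix (Fin 2) (Fin 2) ℂ) (s : Fin n → ℂ)
    (h : ∏ a, s a = 1) : qtensor (fun a => s a • F a) = qtensor F := by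
  funext v w
  simp only [qtensor, Matrix.smul_apply, smul_eq_mul]
  rw [Finset.prod_mul_distrib, h, one_mul]

lemma gGen_comm {n : ℕ} (G : SimpleGraph (Fin n)) [DecidableRel G.Adj] (i j : Fin n) :
    gGen G i * gGen G j = gGen G j * gGen G i := by
  rcases eq_or_ne i j with rfl | hij
  · rfl
  unfold gGen
  rw [qtensor_mul, qtensor_mul]
  have hfac : (fun a => (if a = j then PX else if G.Adj j a then PZ else 1) *
        (if a = i then PX else if G.Adj i a then PZ else 1))
      = fun a => (if (a = i ∨ a = j) ∧ G.Adj i j then (-1 : ℂ) else 1) •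
        ((if a = i then PX else if G.Adj i a then PZ else 1) *
         (if a = j then PX else if G.Adj j a then PZ else 1)) := by
    funext b
    by_cases hbi : b = i <;> by_cases hbj : b = j
    · exact absurd (hbi.symm.trans hbj) hij
    · have e1 : G.Adj j b ↔ G.Adj i j := by rw [hbi, G.adj_comm]
      by_cases hA : G.Adj i j
      · simp only [if_pos hbi, if_neg hbj, if_pos (e1.mpr hA),
          if_pos (show (b = i ∨ b = j) ∧ G.Adj i j from ⟨Or.inl hbi, hA⟩)]
        exact PZ_mul_PX
      · simp only [if_pos hbi, if_neg hbj, if_neg (fun h => hA (e1.mp h)),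
          if_neg (show ¬((b = i ∨ b = j) ∧ G.Adj i j) from fun h => hA h.2),
          one_mul, mul_one, one_smul]
    · have e2 : G.Adj i b ↔ G.Adj i j := by rw [hbj]
      by_cases hA : G.Adj i j
      · simp only [if_neg hbi, if_pos hbj, if_pos (e2.mpr hA),
          if_pos (show (b = i ∨ b = j) ∧ G.Adj i j from ⟨Or.inr hbj, hA⟩)]
        rw [PZ_mul_PX, smul_smul]
        norm_num
      · simp only [if_neg hbi, if_pos hbj, if_neg (fun h => hA (e2.mp h)),
          if_neg (show ¬((b = i ∨ b = j) ∧ G.Adj i j) from fun h => hA h.2),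
          one_mul, mul_one, one_smul]
    · have hns : ¬((b = i ∨ b = j) ∧ G.Adj i j) := fun h => h.1.elim hbi hbj
      simp only [if_neg hbi, if_neg hbj, if_neg hns, one_smul]
      by_cases h1 : G.Adj j b <;> by_cases h2 : G.Adj i b <;>
        simp [h1, h2]
  rw [hfac, qtensor_smul_eq]
  by_cases hA : G.Adj i j
  · have : (fun a => if (a = i ∨ a = j) ∧ G.Adj i j then (-1 : ℂ) else 1)
        = fun a => if a ∈ ({i, j} : Finset (Fin n)) then (-1 : ℂ) else 1 := by
      funext b; simp [hA, Finset.mem_insert]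
    rw [this, Fintype.prod_ite_mem, Finset.prod_const, Finset.card_pair hij]
    norm_num
  · simp [hA]


section
variable {n : ℕ} (G : SimpleGraph (Fin n)) [DecidableRel G.Adj] (k : Fin n)

/-- `X` acting on qubit `k` alone. -/
def Xop : QMat n := qtensor fun a => if a = k then PX else 1

/-- The diagonal entries of `Z_{N(k)}`. -/
def epsZ (v : Fin n → Fin 2) : ℂ :=
  ∏ a, if a ∈ G.neighborFinset k then (-1 : ℂ) ^ (v a : ℕ) else 1

/-- Flip bit `k`. -/
def flipk (v : Fin n → Fin 2) : Fin n → Fin 2 := Function.update v k (flip2 (v k))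

lemma flipk_apply_self (v : Fin n → Fin 2) : flipk k v k = flip2 (v k) :=
  Function.update_self _ _ _

lemma flipk_apply_ne (v : Fin n → Fin 2) {b : Fin n} (h : b ≠ k) : flipk k v b = v b :=
  Function.update_of_ne h _ _

lemma flipk_flipk (v : Fin n → Fin 2) : flipk k (flipk k v) = v := by
  funext b
  by_cases h : b = k
  · subst h; rw [flipk_apply_self, flipk_apply_self, flip2_flip2]
  · rw [flipk_apply_ne k _ h, flipk_apply_ne k _ h]

lemma ZopN_eq_diagonal : ZopN G k = Matrix.diagonal (epsZ G k) := by
  funext v w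
  show ∏ b, (if b ∈ G.neighborFinset k then PZ else 1) (v b) (w b) = _
  by_cases h : v = w
  · subst h
    rw [Matrix.diagonal_apply_eq, epsZ]
    refine Finset.prod_congr rfl fun b _ => ?_
    by_cases hb : b ∈ G.neighborFinset k
    · rw [if_pos hb, if_pos hb, PZ_diag]
    · rw [if_neg hb, if_neg hb, Matrix.one_apply_eq]
  · rw [Matrix.diagonal_apply_ne _ h]
    obtain ⟨b, hb⟩ := Function.ne_iff.mp h
    refine Finset.prod_eq_zero (Finset.mem_univ b) ?_
    by_cases hmem : b ∈ G.neighborFinset k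
    · rw [if_pos hmem]; exact PZ_off hb
    · rw [if_neg hmem]; exact Matrix.one_apply_ne hb


lemma Xop_apply (v u : Fin n → Fin 2) :
    Xop k v u = if u = flipk k v then 1 else 0 := by
  show ∏ b, (if b = k then PX else 1) (v b) (u b) = _
  by_cases h : u = flipk k v
  · subst h
    rw [if_pos rfl]
    refine Finset.prod_eq_one fun b _ => ?_
    by_cases hb : b = k
    · subst hb; rw [if_pos rfl, flipk_apply_self, PX_flip]
    · rw [if_neg hb, flipk_apply_ne k _ hb, Matrix.one_apply_eq]
  · rw [if_neg h]
    obtain ⟨b, hb⟩ := Function.ne_iff.mp h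
    refine Finset.prod_eq_zero (Finset.mem_univ b) ?_
    by_cases hbk : b = k
    · subst hbk
      rw [if_pos rfl]
      rw [flipk_apply_self] at hb
      rw [eq_of_ne_flip2 hb, PX_diag]
    · rw [if_neg hbk]
      rw [flipk_apply_ne k _ hbk] at hb
      exact Matrix.one_apply_ne (Ne.symm hb)

lemma Xop_mul_apply (M : QMat n) (v w : Fin n → Fin 2) :
    (Xop k * M) v w = M (flipk k v) w := by
  rw [Matrix.mul_apply]
  rw [Finset.sum_congr rfl fun u _ => by rw [Xop_apply, ite_mul, one_mul, zero_mul]]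
  exact Finset.sum_ite_eq' _ _ _ |>.trans (if_pos (Finset.mem_univ _))

lemma mul_Xop_apply (M : QMat n) (v w : Fin n → Fin 2) :
    (M * Xop k) v w = M v (flipk k w) := by
  rw [Matrix.mul_apply]
  have huw : ∀ u : Fin n → Fin 2, Xop k u w = if u = flipk k w then 1 else 0 := by
    intro u
    rw [Xop_apply]
    congr 1
    simp only [eq_iff_iff]
    constructor
    · intro h; rw [h, flipk_flipk]
    · intro h; rw [h, flipk_flipk]
  rw [Finset.sum_congr rfl fun u _ => by rw [huw u, mul_ite, mul_one, mul_zero]]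
  exact Finset.sum_ite_eq' _ _ _ |>.trans (if_pos (Finset.mem_univ _))

lemma Xop_mul_Xop : Xop k * Xop k = (1 : QMat n) := by
  rw [Xop, qtensor_mul]
  rw [show (fun a => (if a = k then PX else 1) * (if a = k then PX else 1))
      = fun _ : Fin n => (1 : Matrix (Fin 2) (Fin 2) ℂ) from funext fun b => by
    by_cases hb : b = k
    · rw [if_pos hb, PX_mul_PX]
    · rw [if_neg hb, one_mul]]
  exact qtensor_one

lemma gGen_eq_Xop_mul_ZopN : gGen G k = Xop k * ZopN G k := by
  rw [gGen, Xop, ZopN, qtensor_mul]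
  refine congrArg qtensor (funext fun b => ?_)
  by_cases hb : b = k
  · subst hb
    rw [if_pos rfl, if_pos rfl, if_neg (SimpleGraph.notMem_neighborFinset_self G b), mul_one]
  · rw [if_neg hb, if_neg hb, one_mul]
    by_cases hA : G.Adj k b
    · rw [if_pos hA, if_pos ((SimpleGraph.mem_neighborFinset G k b).mpr hA)]
    · rw [if_neg hA, if_neg (fun hm => hA ((SimpleGraph.mem_neighborFinset G k b).mp hm))]

lemma Xop_comm_ZopN : Xop k * ZopN G k = ZopN G k * Xop k := by
  rw [Xop, ZopN, qtensor_mul, qtensor_mul]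
  refine congrArg qtensor (funext fun b => ?_)
  by_cases hb : b = k
  · subst hb
    rw [if_neg (SimpleGraph.notMem_neighborFinset_self G b), one_mul, mul_one]
  · by_cases hmem : b ∈ G.neighborFinset k <;> simp [hb, hmem]

lemma gGen_mul_gGen : gGen G k * gGen G k = (1 : QMat n) := by
  rw [gGen, qtensor_mul]
  rw [show (fun a => (if a = k then PX else if G.Adj k a then PZ else 1) *
        (if a = k then PX else if G.Adj k a then PZ else 1))
      = fun _ : Fin n => (1 : Matrix (Fin 2) (Fin 2) ℂ) from funext fun b => by
    by_cases hb : b = k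
    · rw [if_pos hb, PX_mul_PX]
    · by_cases hA : G.Adj k b
      · rw [if_neg hb, if_pos hA, PZ_mul_PZ]
      · rw [if_neg hb, if_neg hA, one_mul]]
  exact qtensor_one

lemma gGen_comm_proj (a : Fin n → Fin 2) :
    Commute (gGen G k) (gBasisProj G a) := by
  unfold gBasisProj
  apply Commute.list_prod_right
  intro x hx
  simp only [List.mem_map] at hx
  obtain ⟨i, _, rfl⟩ := hx
  have hc : Commute (gGen G k) (gGen G i) := gGen_comm G k i
  exact ((hc.smul_right _).add_right (Commute.one_right _)).smul_right _

lemma ZPZ_eq_XPX (a : Fin n → Fin 2) :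
    ZopN G k * gBasisProj G a * ZopN G k = Xop k * gBasisProj G a * Xop k := by
  set P := gBasisProj G a with hP
  have h1 : gGen G k * P * gGen G k = P := by
    rw [(gGen_comm_proj G k a).eq, mul_assoc, gGen_mul_gGen, mul_one]
  have e1 : gGen G k * P * gGen G k = Xop k * (ZopN G k * P * ZopN G k) * Xop k := by
    rw [gGen_eq_Xop_mul_ZopN]
    simp only [mul_assoc]
    rw [Xop_comm_ZopN]
  have e2 : Xop k * (Xop k * (ZopN G k * P * ZopN G k) * Xop k) * Xop k
      = ZopN G k * P * ZopN G k := by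
    simp only [mul_assoc]
    rw [Xop_mul_Xop, mul_one, ← mul_assoc, ← mul_assoc, ← mul_assoc, ← mul_assoc]
    rw [Xop_mul_Xop, one_mul]
  have h3 : Xop k * (ZopN G k * P * ZopN G k) * Xop k = P := e1 ▸ h1
  conv_rhs => rw [← h3]
  exact e2.symm

lemma epsZ_sq (v : Fin n → Fin 2) : epsZ G k v * epsZ G k v = 1 := by
  rw [epsZ, ← Finset.prod_mul_distrib]
  refine Finset.prod_eq_one fun b _ => ?_
  by_cases hb : b ∈ G.neighborFinset k
  · rw [if_pos hb, ← mul_pow]; norm_num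
  · rw [if_neg hb, one_mul]

lemma epsZ_flipk (v : Fin n → Fin 2) : epsZ G k (flipk k v) = epsZ G k v := by
  refine Finset.prod_congr rfl fun b _ => ?_
  by_cases hb : b = k
  · subst hb
    rw [if_neg (SimpleGraph.notMem_neighborFinset_self G b),
      if_neg (SimpleGraph.notMem_neighborFinset_self G b)]
  · rw [flipk_apply_ne k _ hb]

lemma key_entry (a : Fin n → Fin 2) (v w : Fin n → Fin 2) :
    gBasisProj G a (flipk k v) (flipk k w)
      = epsZ G k v * gBasisProj G a v w * epsZ G k w := by
  have h := congrArg (fun M : QMat n => M v w) (ZPZ_eq_XPX G k a)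
  rw [ZopN_eq_diagonal, Matrix.mul_diagonal, Matrix.diagonal_mul] at h
  rw [mul_Xop_apply, Xop_mul_apply] at h
  exact h.symm

end
end GraphProjAux

open GraphProjAux in
/-- `P_a + Z_{N(k)} P_a Z_{N(k)}` is invariant under partial transposition
on qubit `k` (flipping all label bits in the neighborhood of `k`). -/
theorem graph_proj_plus_neighborhood_flip_invariant_qpt
    {n : ℕ} (G : SimpleGraph (Fin n)) [DecidableRel G.Adj]
    (a : Fin n → Fin 2) (k : Fin n) :
    qpt {k} (gBasisProj G a + ZopN G k * gBasisProj G a * ZopN G k)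
      = gBasisProj G a + ZopN G k * gBasisProj G a * ZopN G k := by
  funext v w
  simp only [qpt, Finset.mem_singleton]
  by_cases h : v k = w k
  · have hv : (fun b => if b = k then w b else v b) = v := funext fun b => by
      by_cases hb : b = k
      · subst hb; rw [if_pos rfl, ← h]
      · rw [if_neg hb]
    have hw : (fun b => if b = k then v b else w b) = w := funext fun b => by
      by_cases hb : b = k
      · subst hb; rw [if_pos rfl, h]
      · rw [if_neg hb]
    rw [hv, hw]
  · have hv : (fun b => if b = k then w b else v b) = flipk k v := funext fun b => by
      by_cases hb : b = k
      · subst hb; rw [if_pos rfl, flipk_apply_self]; exact eq_flip2_of_ne h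
      · rw [if_neg hb, flipk_apply_ne k _ hb]
    have hw : (fun b => if b = k then v b else w b) = flipk k w := funext fun b => by
      by_cases hb : b = k
      · subst hb; rw [if_pos rfl, flipk_apply_self]; exact eq_flip2_of_ne (Ne.symm h)
      · rw [if_neg hb, flipk_apply_ne k _ hb]
    rw [hv, hw]
    simp only [Matrix.add_apply]
    have hZ : ∀ x y, (ZopN G k * gBasisProj G a * ZopN G k) x y
        = epsZ G k x * gBasisProj G a x y * epsZ G k y := fun x y => by
      rw [ZopN_eq_diagonal, Matrix.mul_diagonal, Matrix.diagonal_mul]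
    rw [hZ, hZ, key_entry, epsZ_flipk, epsZ_flipk]
    have hv2 := epsZ_sq G k v
    have hw2 := epsZ_sq G k w
    set p := gBasisProj G a v w
    linear_combination epsZ G k w * epsZ G k w * p * hv2 + p * hw2
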